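/- Under the same assumptions (invertible Jacobi operator, decaying symmetric Green's function, nondegenerate entries), if k ≤ n < ℓ then G(k,ℓ) = G(k,n+1)·G(n,ℓ)/G(n+1,n). -/

import Mathlib

open Filter

/-- Wronskian/telescoping lemma for the Green's function of a Jacobi operator. -/
lemma jacobi_wronskian (κ : ℝ) (a b : ℤ → ℝ) (C : ℝ) (hC : ∀ j, |a j| ≤ C)
    (G : ℤ → ℤ → ℝ)
    (hdiff : ∀ j k : ℤ, Real.cosh κ * G j k -
      (a j * G (j + 1) k + a (j - 1) * G (j - 1) k + b j * G j k) = if j = k then 1 else 0)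
    (hsymm : ∀ i j : ℤ, G i j = G j i)
    (hdec : ∀ p : ℤ, Tendsto (fun m => G m p) cofinite (nhds 0))
    (p q : ℤ) (hpq : p ≤ q) :
    (∀ m : ℤ, m < p → a m * (G (m + 1) p * G m q - G m p * G (m + 1) q) = 0) ∧
    (∀ m : ℤ, p ≤ m → m < q →
      a m * (G (m + 1) p * G m q - G m p * G (m + 1) q) = -(G p q)) := by
  set F : ℤ → ℝ := fun m => a m * (G (m + 1) p * G m q - G m p * G (m + 1) q) with hF
  -- jump formula
  have hjump : ∀ m : ℤ, F m - F (m - 1) =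
      (if m = q then G m p else 0) - (if m = p then G m q else 0) := by
    intro m
    have e1 := hdiff m p
    have e2 := hdiff m q
    simp only [hF]
    rw [show m - 1 + 1 = m by ring]
    by_cases h1 : m = p
    · by_cases h2 : m = q
      · rw [if_pos h1] at e1
        rw [if_pos h2] at e2
        rw [if_pos h2, if_pos h1]
        linear_combination G m p * e2 - G m q * e1
      · rw [if_pos h1] at e1
        rw [if_neg h2] at e2
        rw [if_neg h2, if_pos h1]
        linear_combination G m p * e2 - G m q * e1
    · by_cases h2 : m = q
      · rw [if_neg h1] at e1
        rw [if_pos h2] at e2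
        rw [if_pos h2, if_neg h1]
        linear_combination G m p * e2 - G m q * e1
      · rw [if_neg h1] at e1
        rw [if_neg h2] at e2
        rw [if_neg h2, if_neg h1]
        linear_combination G m p * e2 - G m q * e1
  -- limit of F along cofinite is 0
  have hshift : Tendsto (fun m : ℤ => m + 1) cofinite cofinite := by
    exact Function.Injective.tendsto_cofinite (fun x y h => by omega)
  have hdecs : ∀ r : ℤ, Tendsto (fun m : ℤ => G (m + 1) r) cofinite (nhds 0) :=
    fun r => (hdec r).comp hshift
  have hX : Tendsto (fun m => G (m + 1) p * G m q - G m p * G (m + 1) q)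
      cofinite (nhds 0) := by
    have := ((hdecs p).mul (hdec q)).sub ((hdec p).mul (hdecs q))
    simpa using this
  have hF0 : Tendsto F cofinite (nhds 0) := by
    refine squeeze_zero_norm (fun m => ?_) (by simpa using hX.norm.const_mul C :
      Tendsto (fun m => C * ‖G (m + 1) p * G m q - G m p * G (m + 1) q‖) cofinite (nhds 0))
    simp only [hF, norm_mul]
    exact mul_le_mul_of_nonneg_right (hC m) (norm_nonneg _)
  -- tails are constant
  have htail_up : ∀ m : ℤ, q ≤ m → F m = F q := by
    intro m hm
    refine Int.le_induction (m := q) (motive := fun m _ => F m = F q) rfl ?_ m hm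
    intro n hn ih
    have h := hjump (n + 1)
    rw [show n + 1 - 1 = n by ring] at h
    rw [if_neg (by omega : ¬ n + 1 = q), if_neg (by omega : ¬ n + 1 = p)] at h
    linarith
  have htail_down : ∀ m : ℤ, m ≤ p - 1 → F m = F (p - 1) := by
    intro m hm
    refine Int.le_induction_down (m := p - 1) (motive := fun m _ => F m = F (p - 1)) rfl ?_ m hm
    intro n hn ih
    have h := hjump n
    rw [if_neg (by omega : ¬ n = q), if_neg (by omega : ¬ n = p)] at h
    linarith
  -- tail values vanish
  have hatTop : Tendsto F atTop (nhds 0) := hF0.mono_left atTop_le_cofinite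
  have hbotle : (atBot : Filter ℤ) ≤ cofinite :=
    le_cofinite_iff_eventually_ne.mpr fun x => eventually_ne_atBot x
  have hatBot : Tendsto F atBot (nhds 0) := hF0.mono_left hbotle
  have hFq : F q = 0 := by
    have hev : (fun _ : ℤ => F q) =ᶠ[atTop] F :=
      eventually_atTop.2 ⟨q, fun m hm => (htail_up m hm).symm⟩
    exact tendsto_nhds_unique (tendsto_const_nhds.congr' hev) hatTop
  have hFp : F (p - 1) = 0 := by
    have hev : (fun _ : ℤ => F (p - 1)) =ᶠ[atBot] F :=
      eventually_atBot.2 ⟨p - 1, fun m hm => (htail_down m hm).symm⟩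
    exact tendsto_nhds_unique (tendsto_const_nhds.congr' hev) hatBot
  constructor
  · intro m hm
    have := htail_down m (by omega)
    simp only [hF] at this ⊢
    rw [this]
    simpa only [hF] using hFp
  · -- middle values
    intro m hmp hmq
    have key : ∀ m : ℤ, p ≤ m → m < q → F m = -(G p q) := by
      intro m hmp
      refine Int.le_induction (m := p)
        (motive := fun m _ => m < q → F m = -(G p q)) ?_ ?_ m hmp
      · intro hpq'
        have h := hjump p
        rw [if_neg (by omega : ¬ p = q), if_pos rfl] at h
        rw [hFp] at h
        linarith
      · intro n hn ih h1
        have hnq : n < q := by omega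
        have h := hjump (n + 1)
        rw [show n + 1 - 1 = n by ring] at h
        rw [if_neg (by omega : ¬ n + 1 = q), if_neg (by omega : ¬ n + 1 = p)] at h
        rw [ih hnq] at h
        linarith
    exact key m hmp hmq

/-- For an invertible Jacobi operator with decaying symmetric Green's function `G` and
nondegenerate entries: if `k ≤ n < ℓ` then `G(k,ℓ) = G(k,n+1)·G(n,ℓ)/G(n+1,n)`. -/
theorem jacobi_splitting_identity (κ : ℝ) (a b : ℤ → ℝ) (ha : ∀ n, 0 < a n)
    (L R : lp (fun _ : ℤ => ℝ) 2 →L[ℝ] lp (fun _ : ℤ => ℝ) 2)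
    (hL : ∀ (f : lp (fun _ : ℤ => ℝ) 2) (j : ℤ),
      L f j = Real.cosh κ * f j - (a j * f (j + 1) + a (j - 1) * f (j - 1) + b j * f j))
    (hR1 : R * L = 1) (hR2 : L * R = 1)
    (G : ℤ → ℤ → ℝ) (hG : ∀ i j : ℤ, G i j = R (lp.single 2 j 1) i)
    (hsymm : ∀ i j : ℤ, G i j = G j i)
    (hdecay : ∀ n : ℤ, Filter.Tendsto (fun m => G n m) Filter.cofinite (nhds 0)) :
    ∀ n k l : ℤ, k ≤ n → n < l → G (n + 1) n ≠ 0 →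
      G k l = G k (n + 1) * G n l / G (n + 1) n := by
  have hsingle : ∀ i j : ℤ, (lp.single (E := fun _ : ℤ => ℝ) 2 i 1) j = if j = i then 1 else 0 := by
    intro i j
    by_cases h : j = i
    · subst h; simp [lp.single_apply_self]
    · simp [lp.single_apply_ne _ _ _ h, h]
  -- the difference equation for the Green's function
  have hdiff : ∀ j k : ℤ, Real.cosh κ * G j k -
      (a j * G (j + 1) k + a (j - 1) * G (j - 1) k + b j * G j k) = if j = k then 1 else 0 := by
    intro j k
    have hLR : L (R (lp.single 2 k 1)) = lp.single 2 k 1 := by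
      have := congrArg (fun T => T (lp.single 2 k (1 : ℝ))) hR2
      simpa using this
    have h1 := hL (R (lp.single 2 k 1)) j
    rw [hLR] at h1
    rw [hsingle k j] at h1
    rw [hG j k, hG (j + 1) k, hG (j - 1) k]
    linarith [h1]
  -- entries of `a` are bounded
  have hC : ∀ j : ℤ, |a j| ≤ ‖L‖ := by
    intro j
    set v : lp (fun _ : ℤ => ℝ) 2 := lp.single 2 (j + 1) 1 with hv
    have e := hL v j
    rw [hv] at e
    rw [hsingle (j + 1) j, hsingle (j + 1) (j + 1), hsingle (j + 1) (j - 1)] at e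
    rw [if_neg (by omega : ¬ j = j + 1), if_pos rfl, if_neg (by omega : ¬ j - 1 = j + 1)] at e
    have haj : L v j = -a j := by rw [hv, e]; ring
    have h2 : ‖L v j‖ ≤ ‖L v‖ := lp.norm_apply_le_norm (by norm_num) _ j
    have h3 : ‖L v‖ ≤ ‖L‖ * ‖v‖ := L.le_opNorm v
    have h4 : ‖v‖ = 1 := by
      rw [hv]
      have := lp.norm_single (p := 2) (E := fun _ : ℤ => ℝ) (by norm_num) (j + 1) (1 : ℝ)
      simpa using this
    rw [haj] at h2
    simp only [norm_neg, Real.norm_eq_abs] at h2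
    calc |a j| ≤ ‖L v‖ := h2
      _ ≤ ‖L‖ * ‖v‖ := h3
      _ = ‖L‖ := by rw [h4, mul_one]
  -- decay in the first variable
  have hdec1 : ∀ p : ℤ, Filter.Tendsto (fun m => G m p) Filter.cofinite (nhds 0) := by
    intro p
    have : (fun m => G m p) = fun m => G p m := funext fun m => hsymm m p
    rw [this]; exact hdecay p
  intro n k l hkn hnl hne
  obtain ⟨-, hmidI⟩ := jacobi_wronskian κ a b ‖L‖ hC G hdiff hsymm hdec1 k l (by omega)
  obtain ⟨-, hmidV⟩ := jacobi_wronskian κ a b ‖L‖ hC G hdiff hsymm hdec1 k (n + 1) (by omega)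
  obtain ⟨hlowIII, -⟩ := jacobi_wronskian κ a b ‖L‖ hC G hdiff hsymm hdec1 (n + 1) l (by omega)
  have I := hmidI n hkn hnl
  have V := hmidV n hkn (by omega)
  have III := hlowIII n (by omega)
  have hs : G (n + 1) n = G n (n + 1) := hsymm (n + 1) n
  rw [hs] at hne ⊢
  field_simp
  linear_combination (G n (n + 1)) * I + (-(G n l)) * V + (-(G n k)) * III
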